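/- For x ≥ 1, ψ'(x) - 1/x < 1/(2x²) + 1/(6x³) - 1/(30x⁵) + 1/(42x⁷), where ψ' is the trigamma function. -/

import Mathlib

open Real Filter Topology Set

noncomputable def digamma (x : ℝ) : ℝ := deriv Real.Gamma x / Real.Gamma x

noncomputable def trigamma (x : ℝ) : ℝ := deriv digamma x

lemma gamma_ne_neg {x : ℝ} (hx : 0 < x) : ∀ m : ℕ, x ≠ -m :=
  fun m => ((neg_nonpos.mpr (Nat.cast_nonneg m)).trans_lt hx).ne'

lemma hasDerivAt_logGamma {x : ℝ} (hx : 0 < x) :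
    HasDerivAt (fun y => Real.log (Real.Gamma y)) (digamma x) x :=
  ((Real.differentiableAt_Gamma (gamma_ne_neg hx)).hasDerivAt).log
    (Real.Gamma_pos_of_pos hx).ne'

lemma digamma_rec {x : ℝ} (hx : 0 < x) : digamma (x + 1) = digamma x + 1 / x := by
  have h1 : HasDerivAt (fun y => Real.log (Real.Gamma (y + 1))) (digamma (x + 1)) x :=
    (hasDerivAt_logGamma (by linarith)).comp_add_const
  have h2 : (fun y => Real.log (Real.Gamma (y + 1)))
      =ᶠ[𝓝 x] (fun y => Real.log (Real.Gamma y) + Real.log y) := by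
    filter_upwards [eventually_gt_nhds hx] with y hy
    rw [Real.Gamma_add_one hy.ne', Real.log_mul hy.ne' (Real.Gamma_pos_of_pos hy).ne', add_comm]
  have h3 : HasDerivAt (fun y => Real.log (Real.Gamma y) + Real.log y)
      (digamma x + x⁻¹) x :=
    (hasDerivAt_logGamma hx).add (Real.hasDerivAt_log hx.ne')
  have h4 : HasDerivAt (fun y => Real.log (Real.Gamma y) + Real.log y) (digamma (x + 1)) x :=
    h1.congr_of_eventuallyEq h2.symm
  rw [h4.unique h3, one_div]

lemma digamma_lower {x : ℝ} (hx : 0 < x) : Real.log x ≤ digamma (x + 1) := by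
  have hc : ConvexOn ℝ (Ioi 0) (fun y => Real.log (Real.Gamma y)) := by
    simpa [Function.comp_def] using Real.convexOn_log_Gamma
  have hd : deriv (fun y => Real.log (Real.Gamma y)) (x + 1) = digamma (x + 1) :=
    (hasDerivAt_logGamma (by linarith)).deriv
  have := hc.slope_le_deriv (mem_Ioi.mpr hx) (mem_Ioi.mpr (by linarith : (0:ℝ) < x + 1))
    (by linarith) (hasDerivAt_logGamma (by linarith : (0:ℝ) < x + 1)).differentiableAt
  rw [hd, slope_def_field, show x + 1 - x = (1:ℝ) by ring, div_one,
    Real.Gamma_add_one hx.ne', Real.log_mul hx.ne' (Real.Gamma_pos_of_pos hx).ne',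
    add_sub_cancel_right] at this
  exact this

lemma digamma_upper {x : ℝ} (hx : 0 < x) : digamma (x + 1) ≤ Real.log (x + 1) := by
  have hc : ConvexOn ℝ (Ioi 0) (fun y => Real.log (Real.Gamma y)) := by
    simpa [Function.comp_def] using Real.convexOn_log_Gamma
  have hd : deriv (fun y => Real.log (Real.Gamma y)) (x + 1) = digamma (x + 1) :=
    (hasDerivAt_logGamma (by linarith)).deriv
  have := hc.deriv_le_slope (mem_Ioi.mpr (by linarith : (0:ℝ) < x + 1))
    (mem_Ioi.mpr (by linarith : (0:ℝ) < x + 2)) (by linarith)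
    (hasDerivAt_logGamma (by linarith : (0:ℝ) < x + 1)).differentiableAt
  rw [hd, slope_def_field, show x + 2 - (x + 1) = (1:ℝ) by ring, div_one,
    show x + 2 = (x + 1) + 1 by ring,
    Real.Gamma_add_one (by linarith : x + 1 ≠ 0),
    Real.log_mul (by linarith : x + 1 ≠ 0) (Real.Gamma_pos_of_pos (by linarith)).ne',
    add_sub_cancel_right] at this
  exact this

lemma digamma_add_nat {x : ℝ} (hx : 0 < x) (N : ℕ) :
    digamma (x + N) = digamma x + ∑ k ∈ Finset.range N, 1 / (x + k) := by
  induction N with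
  | zero => simp
  | succ n ih =>
    have h1 : x + ((n : ℕ) + 1 : ℕ) = (x + n) + 1 := by push_cast; ring
    rw [h1, digamma_rec (add_pos_of_pos_of_nonneg hx (Nat.cast_nonneg n)), ih,
      Finset.sum_range_succ]
    ring

lemma tendsto_digamma_aux {x : ℝ} (hx : 0 < x) :
    Tendsto (fun N : ℕ => Real.log (x + N) - ∑ k ∈ Finset.range N, 1 / (x + k))
      atTop (𝓝 (digamma x)) := by
  have hb : Tendsto (fun N : ℕ => 1 / (x + N - 1)) atTop (𝓝 0) := by
    have h1 : Tendsto (fun N : ℕ => x + (N : ℝ) - 1) atTop atTop := by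
      apply tendsto_atTop_add_const_right
      exact tendsto_atTop_add_const_left _ _ tendsto_natCast_atTop_atTop
    simpa only [one_div, Function.comp_def] using tendsto_inv_atTop_zero.comp h1
  have key : Tendsto (fun N : ℕ => Real.log (x + N) - digamma (x + N)) atTop (𝓝 0) := by
    apply tendsto_of_tendsto_of_tendsto_of_le_of_le' tendsto_const_nhds hb
    · filter_upwards [eventually_ge_atTop 1] with N hN
      have hy : (0:ℝ) < x + N - 1 := by
        have : (1:ℝ) ≤ N := Nat.one_le_cast.mpr hN
        linarith
      have := digamma_upper hy
      rw [show x + (N:ℝ) - 1 + 1 = x + N by ring] at this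
      linarith
    · filter_upwards [eventually_ge_atTop 1] with N hN
      have hy : (0:ℝ) < x + N - 1 := by
        have : (1:ℝ) ≤ N := Nat.one_le_cast.mpr hN
        linarith
      have hlow := digamma_lower hy
      rw [show x + (N:ℝ) - 1 + 1 = x + N by ring] at hlow
      have hlog : Real.log (x + N) - Real.log (x + N - 1) ≤ 1 / (x + N - 1) := by
        rw [← Real.log_div (by linarith) hy.ne']
        have h2 : (0:ℝ) < (x + N) / (x + N - 1) := by positivity
        have := Real.log_le_sub_one_of_pos h2
        have h3 : (x + (N:ℝ)) / (x + N - 1) - 1 = 1 / (x + N - 1) := by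
          field_simp
          ring
        linarith
      linarith
  have heq : (fun N : ℕ => Real.log (x + N) - ∑ k ∈ Finset.range N, 1 / (x + k))
      = fun N : ℕ => (Real.log (x + N) - digamma (x + N)) + digamma x := by
    funext N
    rw [digamma_add_nat hx N]
    ring
  rw [heq]
  simpa using key.add tendsto_const_nhds

lemma summable_inv_sq {x : ℝ} (hx : 1 / 2 < x) :
    Summable (fun n : ℕ => 1 / (x + n) ^ 2) := by
  have hs : Summable (fun n : ℕ => 4 * (1 / ((n : ℝ) + 1) ^ 2)) := by
    apply Summable.mul_left
    have := (summable_nat_add_iff (f := fun n : ℕ => 1 / (n : ℝ) ^ 2) 1).2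
      (Real.summable_one_div_nat_pow.mpr one_lt_two)
    simpa using this
  apply Summable.of_nonneg_of_le (fun n => by positivity) _ hs
  intro n
  have hn : (0:ℝ) ≤ n := Nat.cast_nonneg n
  have h1 : ((n:ℝ) + 1) / 2 < x + n := by linarith
  have h2 : (0:ℝ) < ((n:ℝ) + 1) / 2 := by linarith
  have h3 : (((n:ℝ) + 1) / 2) ^ 2 ≤ (x + n) ^ 2 := by nlinarith
  have h4 : 1 / (x + n) ^ 2 ≤ 1 / ((((n:ℝ) + 1) / 2) ^ 2) :=
    one_div_le_one_div_of_le (by positivity) h3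
  calc 1 / (x + n) ^ 2 ≤ 1 / ((((n:ℝ) + 1) / 2) ^ 2) := h4
    _ = 4 * (1 / ((n : ℝ) + 1) ^ 2) := by field_simp; ring

set_option maxHeartbeats 1000000 in
lemma trigamma_eq {x : ℝ} (hx : 1 / 2 < x) :
    trigamma x = ∑' n : ℕ, 1 / (x + n) ^ 2 := by
  set s : Set ℝ := Ioi (1 / 2 : ℝ) with hs_def
  have hs : IsOpen s := isOpen_Ioi
  set F : ℕ → ℝ → ℝ := fun N y => Real.log (y + N) - ∑ k ∈ Finset.range N, 1 / (y + k) with hF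
  set F' : ℕ → ℝ → ℝ := fun N y => 1 / (y + N) + ∑ k ∈ Finset.range N, 1 / (y + k) ^ 2 with hF'
  set g' : ℝ → ℝ := fun y => ∑' n : ℕ, 1 / (y + n) ^ 2 with hg'
  have hmem : ∀ y ∈ s, (0:ℝ) < y := fun y hy => lt_trans (by norm_num) hy
  have hderiv : ∀ N : ℕ, ∀ y ∈ s, HasDerivAt (F N) (F' N y) y := by
    intro N y hy
    have hy0 := hmem y hy
    have hlog : HasDerivAt (fun z : ℝ => Real.log (z + N)) (1 / (y + N)) y := by
      have := ((hasDerivAt_id y).add_const (N : ℝ)).log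
        (by positivity : y + (N:ℝ) ≠ 0)
      simpa using this
    have hsum : HasDerivAt (fun z : ℝ => ∑ k ∈ Finset.range N, 1 / (z + k))
        (∑ k ∈ Finset.range N, -(1 / (y + k) ^ 2)) y := by
      apply HasDerivAt.fun_sum
      intro k _
      have hk : y + (k:ℝ) ≠ 0 := by positivity
      have := ((hasDerivAt_id y).add_const (k : ℝ)).fun_inv hk
      simpa [one_div, neg_div] using this
    have := hlog.fun_sub hsum
    rw [Finset.sum_neg_distrib, sub_neg_eq_add] at this
    exact this
  have hpt : ∀ y ∈ s, Tendsto (fun N => F N y) atTop (𝓝 (digamma y)) :=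
    fun y hy => tendsto_digamma_aux (hmem y hy)
  have huniv : TendstoUniformlyOn F' g' atTop s := by
    rw [Metric.tendstoUniformlyOn_iff]
    intro ε hε
    set u : ℕ → ℝ := fun n => 1 / (n : ℝ) ^ 2 with hu
    have hu_sum : Summable u := Real.summable_one_div_nat_pow.mpr one_lt_two
    have hb : Tendsto (fun N : ℕ => (∑' j : ℕ, u (j + N)) + 1 / (N : ℝ)) atTop (𝓝 0) := by
      have h1 := tendsto_sum_nat_add u
      have h2 : Tendsto (fun N : ℕ => 1 / (N : ℝ)) atTop (𝓝 0) :=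
        tendsto_one_div_atTop_nhds_zero_nat
      simpa using h1.add h2
    have hev := (hb.eventually (eventually_lt_nhds hε))
    filter_upwards [hev, eventually_ge_atTop 1] with N hN hN1 y hy
    have hy0 := hmem y hy
    have hsum_y := summable_inv_sq (show 1/2 < y from hy)
    have hsplit := Summable.sum_add_tsum_nat_add (f := fun n : ℕ => 1 / (y + n) ^ 2) N hsum_y
    have htail_le : (∑' j : ℕ, 1 / (y + (j + N : ℕ)) ^ 2) ≤ ∑' j : ℕ, u (j + N) := by
      have hle : ∀ j : ℕ, 1 / (y + (j + N : ℕ)) ^ 2 ≤ u (j + N) := by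
        intro j
        have hjN : (1:ℝ) ≤ ((j + N : ℕ) : ℝ) := by
          have h9 : (1:ℕ) ≤ j + N := by omega
          exact_mod_cast h9
        have h5 : ((j + N : ℕ) : ℝ) ≤ y + (j + N : ℕ) := by linarith
        have h6 : (0:ℝ) < ((j + N : ℕ) : ℝ) := by linarith
        have : ((j + N : ℕ) : ℝ) ^ 2 ≤ (y + (j + N : ℕ)) ^ 2 := by nlinarith
        simpa [hu] using one_div_le_one_div_of_le (by positivity) this
      exact Summable.tsum_le_tsum hle
        ((summable_nat_add_iff (f := fun n : ℕ => 1 / (y + n) ^ 2) N).2 hsum_y)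
        ((summable_nat_add_iff (f := u) N).2 hu_sum)
    have htail_nonneg : (0:ℝ) ≤ ∑' j : ℕ, 1 / (y + (j + N : ℕ)) ^ 2 :=
      tsum_nonneg (fun j => by positivity)
    have hNpos : (0:ℝ) < N := by exact_mod_cast hN1
    have hinv_le : 1 / (y + N) ≤ 1 / (N : ℝ) :=
      one_div_le_one_div_of_le hNpos (by linarith)
    have hinv_nonneg : (0:ℝ) ≤ 1 / (y + N) := by positivity
    have htsum_nonneg : (0:ℝ) ≤ ∑' j : ℕ, u (j + N) :=
      tsum_nonneg (fun j => by positivity)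
    rw [Real.dist_eq]
    have hdiff : g' y - F' N y = (∑' j : ℕ, 1 / (y + (j + N : ℕ)) ^ 2) - 1 / (y + N) := by
      simp only [hg', hF']
      rw [← hsplit]
      ring
    have hN0 : (0:ℝ) ≤ 1 / (N : ℝ) := by positivity
    have habs : |g' y - F' N y| ≤ (∑' j : ℕ, u (j + N)) + 1 / (N : ℝ) := by
      rw [hdiff, abs_le]
      constructor
      · linarith
      · linarith
    calc |g' y - F' N y| ≤ (∑' j : ℕ, u (j + N)) + 1 / (N : ℝ) := habs
      _ < ε := by simpa using hN
  have main : HasDerivAt digamma (g' x) x :=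
    hasDerivAt_of_tendstoUniformlyOn hs huniv
      (Eventually.of_forall hderiv) hpt (by exact hx)
  rw [trigamma]
  exact main.deriv

noncomputable def Ftri (y : ℝ) : ℝ :=
  1 / y + 1 / (2 * y ^ 2) + 1 / (6 * y ^ 3) - 1 / (30 * y ^ 5) + 1 / (42 * y ^ 7)

lemma Ftri_key {y : ℝ} (hy : 0 < y) : 1 / y ^ 2 < Ftri y - Ftri (y + 1) := by
  have hy1 : (0:ℝ) < y + 1 := by linarith
  have h : Ftri y - Ftri (y + 1) - 1 / y ^ 2
      = (5 + 35 * y + 98 * y ^ 2 + 126 * y ^ 3 + 63 * y ^ 4)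
        / (210 * y ^ 7 * (y + 1) ^ 7) := by
    unfold Ftri
    field_simp
    ring
  have hpos : (0:ℝ) < (5 + 35 * y + 98 * y ^ 2 + 126 * y ^ 3 + 63 * y ^ 4)
      / (210 * y ^ 7 * (y + 1) ^ 7) := by positivity
  linarith

lemma Ftri_pos {y : ℝ} (hy : 1 ≤ y) : 0 < Ftri y := by
  have hy0 : (0:ℝ) < y := by linarith
  have h30 : 1 / (30 * y ^ 5) ≤ 1 / (6 * y ^ 3) := by
    apply one_div_le_one_div_of_le (by positivity)
    have h1 : (1:ℝ) ≤ y ^ 2 := by nlinarith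
    nlinarith [pow_pos hy0 3]
  have h1 : (0:ℝ) < 1 / y := by positivity
  have h2 : (0:ℝ) < 1 / (2 * y ^ 2) := by positivity
  have h3 : (0:ℝ) < 1 / (42 * y ^ 7) := by positivity
  unfold Ftri
  linarith

lemma Ftri_tendsto_zero : Tendsto Ftri atTop (𝓝 0) := by
  have hterm : ∀ (c : ℝ) (k : ℕ), 0 < c → 0 < k →
      Tendsto (fun y : ℝ => 1 / (c * y ^ k)) atTop (𝓝 0) := by
    intro c k hc hk
    apply Tendsto.div_atTop (tendsto_const_nhds (x := (1:ℝ)))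
    exact (tendsto_pow_atTop hk.ne').const_mul_atTop hc
  have h1 : Tendsto (fun y : ℝ => 1 / y) atTop (𝓝 0) := by
    simpa only [one_div] using tendsto_inv_atTop_zero
  have h2 := hterm 2 2 (by norm_num) (by norm_num)
  have h3 := hterm 6 3 (by norm_num) (by norm_num)
  have h5 := hterm 30 5 (by norm_num) (by norm_num)
  have h7 := hterm 42 7 (by norm_num) (by norm_num)
  have h := (((h1.add h2).add h3).sub h5).add h7
  have h0 : (0:ℝ) + 0 + 0 - 0 + 0 = 0 := by ring
  rw [h0] at h
  unfold Ftri
  exact h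

theorem trigamma_upper (x : ℝ) (hx : 1 ≤ x) :
    trigamma x - 1 / x <
      1 / (2 * x ^ 2) + 1 / (6 * x ^ 3) - 1 / (30 * x ^ 5) + 1 / (42 * x ^ 7) := by
  have hx2 : 1 / 2 < x := by linarith
  have hx0 : (0:ℝ) < x := by linarith
  rw [trigamma_eq hx2]
  have hf : Summable (fun n : ℕ => 1 / (x + n) ^ 2) := summable_inv_sq hx2
  -- telescoping sum
  have harg : ∀ n : ℕ, Ftri (x + (n + 1 : ℕ)) = Ftri (x + n + 1) := by
    intro n; congr 1; push_cast; ring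
  have hps : ∀ N : ℕ, ∑ n ∈ Finset.range N, (Ftri (x + n) - Ftri (x + n + 1))
      = Ftri x - Ftri (x + N) := by
    intro N
    have := Finset.sum_range_sub' (f := fun n : ℕ => Ftri (x + n)) N
    simp only [Nat.cast_zero, add_zero] at this
    rw [← this]
    apply Finset.sum_congr rfl
    intro n _
    rw [harg n]
  have hkey : ∀ n : ℕ, 1 / (x + n) ^ 2 < Ftri (x + n) - Ftri (x + n + 1) := fun n =>
    Ftri_key (add_pos_of_pos_of_nonneg hx0 (Nat.cast_nonneg n))
  have hnonneg : ∀ n : ℕ, (0:ℝ) ≤ Ftri (x + n) - Ftri (x + n + 1) := by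
    intro n
    have := hkey n
    have h0 : (0:ℝ) < 1 / (x + n) ^ 2 := by positivity
    linarith
  have hFN : Tendsto (fun N : ℕ => Ftri (x + N)) atTop (𝓝 0) := by
    apply Ftri_tendsto_zero.comp
    exact tendsto_atTop_add_const_left _ _ tendsto_natCast_atTop_atTop
  have htel : HasSum (fun n : ℕ => Ftri (x + n) - Ftri (x + n + 1)) (Ftri x) := by
    rw [hasSum_iff_tendsto_nat_of_nonneg hnonneg]
    have : Tendsto (fun N : ℕ => Ftri x - Ftri (x + N)) atTop (𝓝 (Ftri x - 0)) :=
      tendsto_const_nhds.sub hFN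
    simp only [sub_zero] at this
    convert this using 1
    funext N
    exact hps N
  have hlt : (∑' n : ℕ, 1 / (x + n) ^ 2) < Ftri x := by
    have := Summable.tsum_lt_tsum (f := fun n : ℕ => 1 / (x + n) ^ 2)
      (g := fun n : ℕ => Ftri (x + n) - Ftri (x + n + 1)) (i := 0)
      (fun n => (hkey n).le) (hkey 0) hf htel.summable
    rwa [htel.tsum_eq] at this
  have hFx : Ftri x = 1 / x + (1 / (2 * x ^ 2) + 1 / (6 * x ^ 3)
      - 1 / (30 * x ^ 5) + 1 / (42 * x ^ 7)) := by
    unfold Ftri; ring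
  linarith
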